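/- For every z ∈ ℂ with Im z ≠ 0, log(4 sin²(πz)) = 2πi(1/2 - {sgn(Im z)·Re z + i|Im z|}) + 2 log(1 - e^{2πi sgn(Im z) z}), where log is the principal branch, sgn is the sign function, and {w} := 1/2 + (i/(2π)) log e^{-2πi(w - 1/2)} is the complex fractional part. -/

import Mathlib

/-- Complex fractional part `{w} := 1/2 + (i/(2π)) Log e^{-2πi(w-1/2)}`. -/
noncomputable def cfract (w : ℂ) : ℂ :=
  1 / 2 + Complex.I / (2 * Real.pi) *
    Complex.log (Complex.exp (-(2 * (Real.pi : ℂ) * Complex.I) * (w - 1 / 2)))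

open Complex Real Set in
lemma arg_pos_of_im_pos {z : ℂ} (h : 0 < z.im) : 0 < z.arg := by
  rcases lt_or_eq_of_le (Complex.arg_nonneg_iff.2 h.le) with h' | h'
  · exact h'
  · exfalso
    have := (Complex.arg_eq_zero_iff.1 h'.symm).2
    linarith

lemma core (ζ : ℂ) (hζ : 0 < ζ.im) :
    Complex.log (4 * Complex.sin ((Real.pi : ℂ) * ζ) ^ 2) =
      2 * (Real.pi : ℂ) * Complex.I * (1 / 2 - cfract ζ) +
        2 * Complex.log (1 - Complex.exp (2 * (Real.pi : ℂ) * Complex.I * ζ)) := by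
  set v : ℂ := Complex.exp (2 * (Real.pi : ℂ) * Complex.I * ζ) with hv
  have hvne : v ≠ 0 := Complex.exp_ne_zero _
  have habs : ‖v‖ < 1 := by
    rw [hv, Complex.norm_exp]
    rw [Real.exp_lt_one_iff]
    have : (2 * (Real.pi : ℂ) * Complex.I * ζ).re = -(2 * Real.pi * ζ.im) := by
      simp [Complex.mul_re, Complex.mul_im]
    rw [this]
    nlinarith [Real.pi_pos]
  have hre : 0 < (1 - v).re := by
    have h1 : |v.re| ≤ ‖v‖ := Complex.abs_re_le_norm v
    have := abs_le.1 h1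
    simp only [Complex.sub_re, Complex.one_re]
    linarith
  have hune : (1 : ℂ) - v ≠ 0 := by
    intro h
    rw [h] at hre
    simp at hre
  have hB : |Complex.arg (1 - v)| < Real.pi / 2 :=
    Complex.abs_arg_lt_pi_div_two_iff.2 (Or.inl hre)
  have hB' := abs_lt.1 hB
  have hmne : -v⁻¹ ≠ 0 := by simpa using hvne
  -- step 1
  have h1 : 2 * (Real.pi : ℂ) * Complex.I * (1 / 2 - cfract ζ) = Complex.log (-v⁻¹) := by
    have hexp : Complex.exp (-(2 * (Real.pi : ℂ) * Complex.I) * (ζ - 1 / 2)) = -v⁻¹ := by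
      rw [show -(2 * (Real.pi : ℂ) * Complex.I) * (ζ - 1 / 2)
          = (Real.pi : ℂ) * Complex.I + -(2 * (Real.pi : ℂ) * Complex.I * ζ) by ring,
        Complex.exp_add, Complex.exp_neg, ← hv, Complex.exp_pi_mul_I]
      ring
    unfold cfract
    rw [hexp]
    have hπ : (Real.pi : ℂ) ≠ 0 := by
      exact_mod_cast Complex.ofReal_ne_zero.2 Real.pi_ne_zero
    field_simp
    ring_nf
    rw [Complex.I_sq]
    ring
  -- step 2
  have h2 : 4 * Complex.sin ((Real.pi : ℂ) * ζ) ^ 2 = -v⁻¹ * ((1 - v) * (1 - v)) := by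
    have hs : (2 * Complex.sin ((Real.pi : ℂ) * ζ)) ^ 2
        = ((Complex.exp (-((Real.pi : ℂ) * ζ) * Complex.I)
            - Complex.exp (((Real.pi : ℂ) * ζ) * Complex.I)) * Complex.I) ^ 2 := by
      rw [Complex.two_sin]
    set a : ℂ := Complex.exp (((Real.pi : ℂ) * ζ) * Complex.I) with ha
    have hane : a ≠ 0 := Complex.exp_ne_zero _
    have hva : v = a ^ 2 := by
      rw [hv, ha, ← Complex.exp_nat_mul]
      congr 1
      push_cast
      ring
    have hainv : Complex.exp (-((Real.pi : ℂ) * ζ) * Complex.I) = a⁻¹ := by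
      rw [ha, ← Complex.exp_neg]
      congr 1
      ring
    rw [hainv] at hs
    have h4 : 4 * Complex.sin ((Real.pi : ℂ) * ζ) ^ 2
        = ((a⁻¹ - a) * Complex.I) ^ 2 := by
      rw [← hs]; ring
    rw [h4, hva]
    field_simp
    ring_nf
    rw [Complex.I_sq]
    ring
  -- step 3
  have h3 : Complex.log ((1 - v) * (1 - v))
      = Complex.log (1 - v) + Complex.log (1 - v) := by
    rw [Complex.log_mul_eq_add_log_iff hune hune]
    constructor <;> [linarith [hB'.1]; linarith [hB'.2, Real.pi_pos]]
  have harg2 : Complex.arg ((1 - v) * (1 - v)) = 2 * Complex.arg (1 - v) := by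
    have := congrArg Complex.im h3
    simpa [Complex.log_im, two_mul] using this
  have hmm : ((1 : ℂ) - v) * (1 - v) ≠ 0 := mul_ne_zero hune hune
  have h4 : Complex.log (-v⁻¹ * ((1 - v) * (1 - v)))
      = Complex.log (-v⁻¹) + Complex.log ((1 - v) * (1 - v)) := by
    rw [Complex.log_mul_eq_add_log_iff hmne hmm, harg2]
    have hA1 := Complex.neg_pi_lt_arg (-v⁻¹)
    have hA2 := Complex.arg_le_pi (-v⁻¹)
    have him : (-v⁻¹).im = v.im / Complex.normSq v := by
      simp [Complex.inv_im]
      ring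
    have him2 : ((1 : ℂ) - v).im = -v.im := by simp
    have hnsq : 0 < Complex.normSq v := Complex.normSq_pos.2 hvne
    rcases lt_trichotomy v.im 0 with h | h | h
    · -- arg(-v⁻¹) < 0, arg(1-v) > 0
      have hA : (-v⁻¹).arg < 0 := Complex.arg_neg_iff.2 (by rw [him]; exact div_neg_of_neg_of_pos h hnsq)
      have hBpos : 0 < ((1 : ℂ) - v).arg := arg_pos_of_im_pos (by rw [him2]; linarith)
      constructor <;> [linarith [hB'.1]; linarith [hB'.2]]
    · -- arg(1-v) = 0
      have hBz : ((1 : ℂ) - v).arg = 0 :=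
        Complex.arg_eq_zero_iff.2 ⟨hre.le, by rw [him2, h, neg_zero]⟩
      rw [hBz]
      constructor <;> simp [hA1, hA2]
    · have hA : 0 < (-v⁻¹).arg := arg_pos_of_im_pos (by rw [him]; exact div_pos h hnsq)
      have hBneg : ((1 : ℂ) - v).arg < 0 := Complex.arg_neg_iff.2 (by rw [him2]; linarith)
      constructor <;> [linarith [hB'.1]; linarith [hB'.2]]
  rw [h2, h4, h3, h1]
  ring


/-- Factorization of the log-sine: for `Im z ≠ 0`,
`log(4 sin²(πz)) = 2πi(1/2 - {sgn(Im z) Re z + i |Im z|}) + 2 log(1 - e^{2πi sgn(Im z) z})`. -/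
theorem logsin_factorization (z : ℂ) (hz : z.im ≠ 0) :
    Complex.log (4 * Complex.sin ((Real.pi : ℂ) * z) ^ 2) =
      2 * (Real.pi : ℂ) * Complex.I *
          (1 / 2 - cfract ((Real.sign z.im : ℝ) * z.re + Complex.I * (|z.im| : ℝ))) +
        2 * Complex.log
          (1 - Complex.exp (2 * (Real.pi : ℂ) * Complex.I * (Real.sign z.im : ℝ) * z)) := by

  rcases hz.lt_or_gt with h | h
  · -- z.im < 0, use ζ = -z
    rw [Real.sign_of_neg h, abs_of_neg h]
    have harg : ((-1 : ℝ) : ℂ) * z.re + Complex.I * ((-z.im : ℝ) : ℂ) = -z := by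
      apply Complex.ext <;> simp
    have hexp : 2 * (Real.pi : ℂ) * Complex.I * ((-1 : ℝ) : ℂ) * z
        = 2 * (Real.pi : ℂ) * Complex.I * (-z) := by push_cast; ring
    have hsin : Complex.sin ((Real.pi : ℂ) * z) ^ 2
        = Complex.sin ((Real.pi : ℂ) * (-z)) ^ 2 := by
      rw [mul_neg, Complex.sin_neg, neg_sq]
    rw [harg, hexp, hsin]
    exact core (-z) (by simpa using h)
  · rw [Real.sign_of_pos h, abs_of_pos h]
    have harg : ((1 : ℝ) : ℂ) * z.re + Complex.I * ((z.im : ℝ) : ℂ) = z := by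
      apply Complex.ext <;> simp
    have hexp : 2 * (Real.pi : ℂ) * Complex.I * ((1 : ℝ) : ℂ) * z
        = 2 * (Real.pi : ℂ) * Complex.I * z := by push_cast; ring
    rw [harg, hexp]
    exact core z h
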